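/- With K(r) as above (the curvature norm |R|² of Calabi's metric for n = 2), if y → +∞, y' → +∞ and e^y/y'³ → 1/(3a) as r → a⁻, then K(r) → 4/3 as r → a⁻. -/

import Mathlib

open Real Set Filter Topology

theorem calabi_curvature_norm_limit_at_a
    (a : ℝ) (ha : 0 < a) (y y' y'' : ℝ → ℝ)
    (hy' : ∀ r ∈ Ioo (0:ℝ) a, HasDerivAt y (y' r) r)
    (hy'' : ∀ r ∈ Ioo (0:ℝ) a, HasDerivAt y' (y'' r) r)
    (hy'pos : ∀ r ∈ Ioo (0:ℝ) a, 0 < y' r)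
    (hode : ∀ r ∈ Ioo (0:ℝ) a, y'' r = r * Real.exp (y r) / y' r)
    (hy_top : Tendsto y (𝓝[<] a) atTop)
    (hy'_top : Tendsto y' (𝓝[<] a) atTop)
    (hlim : Tendsto (fun r => Real.exp (y r) / (y' r) ^ 3) (𝓝[<] a) (𝓝 (1 / (3 * a)))) :
    Tendsto (fun r =>
        2 * (2 - 8 * r * Real.exp (y r) / (y' r) ^ 3
          + (y' r) ^ 4 / (r ^ 4 * Real.exp (2 * y r))
          + 4 / (r * y' r)
          + 12 * r ^ 2 * Real.exp (2 * y r) / (y' r) ^ 6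
          - 2 * y' r / (r ^ 3 * Real.exp (y r))
          - 12 * Real.exp (y r) / (y' r) ^ 4
          + 6 * (y' r) ^ 3 / (r ^ 5 * Real.exp (2 * y r))
          - 12 / (r ^ 4 * Real.exp (y r))
          + 12 * (y' r) ^ 2 / (r ^ 6 * Real.exp (2 * y r))))
      (𝓝[<] a) (𝓝 (4 / 3)) := by
  set A : ℝ → ℝ := fun r => Real.exp (y r) / (y' r) ^ 3 with hA
  set B : ℝ → ℝ := fun r => (A r)⁻¹ with hB
  have hc : (1 / (3 * a) : ℝ) ≠ 0 := by positivity
  have hrA : Tendsto (fun r : ℝ => r) (𝓝[<] a) (𝓝 a) :=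
    tendsto_id.mono_right nhdsWithin_le_nhds
  have hB_lim : Tendsto B (𝓝[<] a) (𝓝 (1 / (3 * a))⁻¹) := hlim.inv₀ hc
  have hexp_top : Tendsto (fun r => Real.exp (y r)) (𝓝[<] a) atTop :=
    Real.tendsto_exp_atTop.comp hy_top
  have hYpow : ∀ n : ℕ, 0 < n → Tendsto (fun r => (y' r) ^ n) (𝓝[<] a) atTop :=
    fun n hn => (tendsto_pow_atTop hn.ne').comp hy'_top
  have hrpow : ∀ n : ℕ, Tendsto (fun r : ℝ => r ^ n) (𝓝[<] a) (𝓝 (a ^ n)) :=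
    fun n => hrA.pow n
  have hdenom : ∀ n m : ℕ, 0 < n → Tendsto (fun r => (y' r) ^ n * r ^ m) (𝓝[<] a) atTop :=
    fun n m hn => (hYpow n hn).atTop_mul_pos (by positivity) (hrpow m)
  -- nice form
  have H : Tendsto (fun r =>
      2 * (2 - 8 * (r * A r)
        + (B r) ^ 2 / ((y' r) ^ 2 * r ^ 4)
        + 4 / (y' r * r)
        + 12 * (r ^ 2 * (A r) ^ 2)
        - 2 * (B r / ((y' r) ^ 2 * r ^ 3))
        - 12 * (A r / y' r)
        + 6 * ((B r) ^ 2 / ((y' r) ^ 3 * r ^ 5))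
        - 12 / (Real.exp (y r) * r ^ 4)
        + 12 * ((B r) ^ 2 / ((y' r) ^ 4 * r ^ 6))))
      (𝓝[<] a)
      (𝓝 (2 * (2 - 8 * (a * (1 / (3 * a)))
        + 0 + 0 + 12 * (a ^ 2 * (1 / (3 * a)) ^ 2) - 2 * 0 - 12 * 0 + 6 * 0 - 0 + 12 * 0))) := by
    refine Tendsto.const_mul 2 ?_
    refine ((((((((tendsto_const_nhds.sub
      ((hrA.mul hlim).const_mul 8)).add
      ((hB_lim.pow 2).div_atTop (hdenom 2 4 two_pos))).add
      (tendsto_const_nhds.div_atTop (hy'_top.atTop_mul_pos ha hrA))).add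
      (((hrpow 2).mul (hlim.pow 2)).const_mul 12)).sub
      ((hB_lim.div_atTop (hdenom 2 3 two_pos)).const_mul 2)).sub
      ((hlim.div_atTop hy'_top).const_mul 12)).add
      (((hB_lim.pow 2).div_atTop (hdenom 3 5 three_pos)).const_mul 6)).sub
      (tendsto_const_nhds.div_atTop (hexp_top.atTop_mul_pos (by positivity) (hrpow 4)))).add
      (((hB_lim.pow 2).div_atTop (hdenom 4 6 four_pos)).const_mul 12)
  have hconst : (2 * (2 - 8 * (a * (1 / (3 * a)))
        + 0 + 0 + 12 * (a ^ 2 * (1 / (3 * a)) ^ 2) - 2 * 0 - 12 * 0 + 6 * 0 - 0 + 12 * 0) : ℝ)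
      = 4 / 3 := by
    field_simp
    ring
  rw [hconst] at H
  refine H.congr' ?_
  filter_upwards [Ioo_mem_nhdsLT_of_mem (⟨ha, le_refl a⟩ : a ∈ Ioc 0 a)] with r hr
  have hr0 : (0:ℝ) < r := hr.1
  have hY : 0 < y' r := hy'pos r hr
  have hE : 0 < Real.exp (y r) := Real.exp_pos _
  have h2 : Real.exp (2 * y r) = Real.exp (y r) * Real.exp (y r) := by
    rw [two_mul, Real.exp_add]
  simp only [hB, hA, h2]
  field_simp
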